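/- Let 1 ≤ d ≤ 2(q−1) and d^⊥ = 2(q²−1)−d. There exists a homogeneous polynomial f ∈ S of degree d whose coefficient of x₂^d is nonzero and such that ev(f) ∈ (PRM_{d^⊥}(q²,2))^q if and only if d ≡ 0 (mod q−1). -/

import Mathlib

open MvPolynomial

/-- The fixed representatives of the points of the projective plane over `F`:
the leftmost nonzero coordinate equals 1. -/
def stdRep (F : Type*) [Field F] : Set (Fin 3 → F) :=
  {v | v 0 = 1 ∨ (v 0 = 0 ∧ v 1 = 1) ∨ (v 0 = 0 ∧ v 1 = 0 ∧ v 2 = 1)}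

/-- The evaluation map at the fixed representatives. -/
noncomputable def ev (F : Type*) [Field F] :
    MvPolynomial (Fin 3) F →ₗ[F] (stdRep F → F) :=
  LinearMap.pi fun Q => (aeval (Q : Fin 3 → F)).toLinearMap

/-- The projective Reed–Muller code of degree `d` over the projective plane. -/
noncomputable def PRM (F : Type*) [Field F] (d : ℕ) : Submodule F (stdRep F → F) :=
  (homogeneousSubmodule (Fin 3) F d).map (ev F)

/-- The componentwise `q`-th power of a set of vectors. -/
def powq {F : Type*} [Field F] (q : ℕ) (Cset : Set (stdRep F → F)) :
    Set (stdRep F → F) :=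
  {v | ∃ w ∈ Cset, v = fun i => (w i) ^ q}

section Stmt13Aux

variable {F : Type*} [Field F] [Fintype F]

/-- The power sum `∑ u^e` over all of `F`. -/
private noncomputable def dsum (F : Type*) [Field F] [Fintype F] (e : ℕ) : F :=
  ∑ u : F, u ^ e

private lemma dsum_zero : dsum F 0 = 0 := by
  simp [dsum, Finset.card_univ]

private lemma sum_pow_eq_units [DecidableEq F] (e : ℕ) (he : e ≠ 0) :
    dsum F e = ∑ x : Fˣ, (x : F) ^ e := by
  have h2 : (Finset.univ.map ⟨(fun x : Fˣ => (x : F)), fun _ _ h => Units.ext h⟩) = Finset.univ \ {0} := by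
    ext x
    simp only [Finset.mem_map, Finset.mem_univ, Function.Embedding.coeFn_mk, true_and,
      Finset.mem_sdiff, Finset.mem_singleton]
    constructor
    · rintro ⟨u, rfl⟩; exact u.ne_zero
    · intro hx; exact ⟨Units.mk0 x hx, rfl⟩
  have h3 : ∑ x : Fˣ, (x : F) ^ e = ∑ x ∈ Finset.univ \ {0}, x ^ e := by
    rw [← h2, Finset.sum_map]; rfl
  have h4 := Finset.sum_sdiff (Finset.singleton_subset_iff.mpr (Finset.mem_univ (0 : F)))
    (f := fun x : F => x ^ e)
  rw [dsum, ← h4, Finset.sum_singleton, zero_pow he, add_zero, h3]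

private lemma dsum_eq (e : ℕ) (he : e ≠ 0) :
    dsum F e = if (Fintype.card F - 1) ∣ e then -1 else 0 := by
  classical
  rw [sum_pow_eq_units e he]
  have := FiniteField.sum_pow_units F e
  simpa [Units.val_pow_eq_pow_val] using this

private lemma dsum_of_dvd (e : ℕ) (he : e ≠ 0) (hd : (Fintype.card F - 1) ∣ e) :
    dsum F e = -1 := by
  rw [dsum_eq e he, if_pos hd]

private lemma dsum_of_not_dvd (e : ℕ) (hd : ¬ (Fintype.card F - 1) ∣ e) :
    dsum F e = 0 := by
  rcases Nat.eq_zero_or_pos e with rfl | he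
  · exact dsum_zero
  · rw [dsum_eq e (by omega), if_neg hd]

private lemma aeval_self_eq_eval {R : Type*} [CommSemiring R] (v : Fin 3 → R)
    (p : MvPolynomial (Fin 3) R) : (aeval v p : R) = eval v p := by
  rw [aeval_def, Algebra.algebraMap_self]
  rfl

private lemma pow_reduce (a : ℕ) (ha : a ≠ 0) (t : F) (M : ℕ) :
    t ^ (a + (Fintype.card F - 1) * M) = t ^ a := by
  by_cases ht : t = 0
  · subst ht; rw [zero_pow ha, zero_pow (by omega)]
  · rw [pow_add, pow_mul, FiniteField.pow_card_sub_one_eq_one t ht, one_pow, mul_one]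

private lemma eval_expand {R : Type*} [CommSemiring R] (r : ℕ) (φ : R →+* R)
    (hφ : ∀ x : R, φ x = x ^ r) (p : MvPolynomial (Fin 3) R) (v : Fin 3 → R) :
    φ (eval v p) = ∑ m ∈ p.support, φ (coeff m p) *
      (v 0 ^ (r * m 0) * v 1 ^ (r * m 1) * v 2 ^ (r * m 2)) := by
  rw [eval_eq', map_sum]
  refine Finset.sum_congr rfl fun m _ => ?_
  rw [map_mul]
  congr 1
  rw [map_prod, Fin.prod_univ_three]
  simp only [map_pow, hφ, ← pow_mul]
  simp only [Nat.mul_comm]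

private lemma sum_chunkA (r : ℕ) (φ : F →+* F) (hφ : ∀ x : F, φ x = x ^ r)
    (p : MvPolynomial (Fin 3) F) (e : ℕ) :
    ∑ s : F, ∑ t : F, φ (eval ![1, s, t] p) * t ^ e
      = ∑ m ∈ p.support, φ (coeff m p) * (dsum F (r * m 1) * dsum F (r * m 2 + e)) := by
  have h1 : ∀ s t : F, φ (eval ![1, s, t] p) * t ^ e
      = ∑ m ∈ p.support, φ (coeff m p) * (s ^ (r * m 1) * t ^ (r * m 2 + e)) := by
    intro s t
    rw [eval_expand r φ hφ, Finset.sum_mul]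
    refine Finset.sum_congr rfl fun m _ => ?_
    simp only [Matrix.cons_val_zero, Matrix.cons_val_one, Matrix.head_cons, one_pow,
      Matrix.cons_val_two, Matrix.tail_cons, pow_add]
    ring
  simp only [h1]
  calc ∑ s : F, ∑ t : F, ∑ m ∈ p.support,
        φ (coeff m p) * (s ^ (r * m 1) * t ^ (r * m 2 + e))
      = ∑ s : F, ∑ m ∈ p.support, ∑ t : F,
          φ (coeff m p) * (s ^ (r * m 1) * t ^ (r * m 2 + e)) :=
        Finset.sum_congr rfl (fun s _ => Finset.sum_comm)
    _ = ∑ m ∈ p.support, ∑ s : F, ∑ t : F,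
          φ (coeff m p) * (s ^ (r * m 1) * t ^ (r * m 2 + e)) := Finset.sum_comm
    _ = ∑ m ∈ p.support, φ (coeff m p) * (dsum F (r * m 1) * dsum F (r * m 2 + e)) := by
        refine Finset.sum_congr rfl fun m _ => ?_
        rw [dsum, dsum, Finset.sum_mul_sum, Finset.mul_sum]
        refine Finset.sum_congr rfl fun s _ => ?_
        rw [Finset.mul_sum]

private lemma sum_chunkB (r : ℕ) (φ : F →+* F) (hφ : ∀ x : F, φ x = x ^ r)
    (p : MvPolynomial (Fin 3) F) (e : ℕ) :
    ∑ t : F, φ (eval ![0, 1, t] p) * t ^ e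
      = ∑ m ∈ p.support, φ (coeff m p) * ((0 : F) ^ (r * m 0) * dsum F (r * m 2 + e)) := by
  have h1 : ∀ t : F, φ (eval ![0, 1, t] p) * t ^ e
      = ∑ m ∈ p.support, (φ (coeff m p) * (0 : F) ^ (r * m 0)) * t ^ (r * m 2 + e) := by
    intro t
    rw [eval_expand r φ hφ, Finset.sum_mul]
    refine Finset.sum_congr rfl fun m _ => ?_
    simp only [Matrix.cons_val_zero, Matrix.cons_val_one, Matrix.head_cons, one_pow,
      Matrix.cons_val_two, Matrix.tail_cons, pow_add]
    ring
  simp only [h1]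
  rw [Finset.sum_comm]
  refine Finset.sum_congr rfl fun m _ => ?_
  rw [dsum, ← Finset.mul_sum, mul_assoc]

private lemma sum_chunkC (r : ℕ) (φ : F →+* F) (hφ : ∀ x : F, φ x = x ^ r)
    (p : MvPolynomial (Fin 3) F) :
    φ (eval ![0, 0, 1] p)
      = ∑ m ∈ p.support, φ (coeff m p) * ((0 : F) ^ (r * m 0) * (0 : F) ^ (r * m 1)) := by
  rw [eval_expand r φ hφ]
  refine Finset.sum_congr rfl fun m _ => ?_
  simp only [Matrix.cons_val_zero, Matrix.cons_val_one, Matrix.head_cons, one_pow,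
    Matrix.cons_val_two, Matrix.tail_cons]
  ring

private lemma gterm {q d m0 m1 m2 : ℕ} (hq : Fintype.card F = q ^ 2) (hq2 : 2 ≤ q)
    (h1 : 1 ≤ d) (h2 : d ≤ 2 * (q - 1))
    (hm : m0 + m1 + m2 = 2 * (q ^ 2 - 1) - d) :
    dsum F m1 * dsum F (m2 + d) + (0 : F) ^ m0 * dsum F (m2 + d)
      + (0 : F) ^ m0 * (0 : F) ^ m1 = 0 := by
  have hqq : 2 * q ≤ q ^ 2 := by nlinarith
  obtain ⟨N, hN⟩ : ∃ N, q ^ 2 = N + 1 :=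
    ⟨q ^ 2 - 1, (Nat.succ_pred_eq_of_pos (by positivity)).symm⟩
  rw [hN] at hq hm hqq
  simp only [Nat.add_sub_cancel] at hm
  have hcard1 : Fintype.card F - 1 = N := by rw [hq]; omega
  have hN3 : 3 ≤ N := by omega
  have hdN : d ≤ N - 1 := by omega
  rcases Nat.eq_zero_or_pos m0 with hm0 | hm0
  · -- m0 = 0
    rw [hm0, pow_zero, one_mul, one_mul]
    rcases Nat.eq_zero_or_pos m1 with hm1 | hm1
    · -- m0 = m1 = 0, m2 = 2N - d
      have hm2 : m2 + d = 2 * N := by omega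
      rw [hm1, dsum_zero, zero_mul, zero_add, pow_zero, hm2,
        dsum_of_dvd _ (by omega) (by rw [hcard1]; exact ⟨2, by ring⟩)]
      ring
    · rw [zero_pow (by omega : m1 ≠ 0), add_zero]
      by_cases hdd : (Fintype.card F - 1) ∣ (m2 + d)
      · rw [hcard1] at hdd
        obtain ⟨c, hc⟩ := hdd
        have hble : m2 + d ≤ 2 * N := by omega
        have hc3 : c < 3 := by
          by_contra hge
          push_neg at hge
          have h5 : N * 3 ≤ N * c := Nat.mul_le_mul_left _ hge
          omega
        interval_cases c
        · omega
        · -- m2 + d = N, so m1 = N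
          have hm1N : m1 = N := by omega
          have hcN : m2 + d = N := by omega
          rw [hm1N, hcN, dsum_of_dvd _ (by omega) (by rw [hcard1])]
          ring
        · -- m2 + d = 2N forces m1 = 0, contradiction
          omega
      · rw [dsum_of_not_dvd _ hdd, mul_zero, add_zero]
  · -- m0 > 0
    rw [zero_pow (by omega : m0 ≠ 0), zero_mul, zero_mul, add_zero, add_zero]
    by_cases hdd : (Fintype.card F - 1) ∣ m1
    · rcases Nat.eq_zero_or_pos m1 with hm1 | hm1
      · rw [hm1, dsum_zero, zero_mul]
      · have hge : N ≤ m1 := hcard1 ▸ Nat.le_of_dvd hm1 hdd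
        have : ¬ (Fintype.card F - 1) ∣ (m2 + d) := by
          rw [hcard1]
          intro hdd2
          have := Nat.le_of_dvd (by omega) hdd2
          omega
        rw [dsum_of_not_dvd _ this, mul_zero]
    · rw [dsum_of_not_dvd _ hdd, zero_mul]

private lemma fterm {q d m0 m1 m2 : ℕ} (hq : Fintype.card F = q ^ 2) (hq2 : 2 ≤ q)
    (h1 : 1 ≤ d) (h2 : d ≤ 2 * (q - 1)) (hnd : ¬ (q - 1) ∣ d)
    (hm : m0 + m1 + m2 = d) :
    dsum F (q * m1) * dsum F (q * m2 + d) + (0 : F) ^ (q * m0) * dsum F (q * m2 + d)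
      + (0 : F) ^ (q * m0) * (0 : F) ^ (q * m1)
    = if m0 = 0 ∧ m1 = 0 then 1 else 0 := by
  have hqq : 2 * q ≤ q ^ 2 := by nlinarith
  have hqq' : q * q = q ^ 2 := (sq q).symm
  obtain ⟨N, hN⟩ : ∃ N, q ^ 2 = N + 1 :=
    ⟨q ^ 2 - 1, (Nat.succ_pred_eq_of_pos (by positivity)).symm⟩
  rw [hN] at hq hqq hqq'
  have hcard1 : Fintype.card F - 1 = N := by rw [hq]; omega
  have hN3 : 3 ≤ N := by omega
  -- the crucial vanishing
  have e1 : q * (2 * (q - 1)) + 2 * (q - 1) = 2 * N := by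
    obtain ⟨a, rfl⟩ : ∃ a, q = a + 2 := ⟨q - 2, by omega⟩
    have ha : a + 2 - 1 = a + 1 := by omega
    rw [ha]
    have hNa : N = a * a + 4 * a + 3 := by
      have : (a + 2) * (a + 2) = N + 1 := hqq'
      nlinarith [this]
    rw [hNa]; ring
  have hmain : ¬ (Fintype.card F - 1) ∣ (q * m2 + d) := by
    rw [hcard1]
    intro hdd
    have hm2d : m2 ≤ d := by omega
    have hb1 : q * m2 ≤ q * d := Nat.mul_le_mul_left _ hm2d
    have hqd : q * d + d ≤ 2 * N := by
      have h5 : q * d ≤ q * (2 * (q - 1)) := Nat.mul_le_mul_left _ h2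
      omega
    have hdle : q * m2 + d ≤ 2 * N := by linarith
    obtain ⟨c, hc⟩ := hdd
    have hc3 : c < 3 := by
      by_contra hge
      push_neg at hge
      have h5 : N * 3 ≤ N * c := Nat.mul_le_mul_left _ hge
      omega
    interval_cases c
    · -- q * m2 + d = 0 impossible
      simp only [Nat.mul_zero] at hc
      omega
    · -- q * m2 + d = N : forces d = q - 1
      rw [Nat.mul_one] at hc
      have hm2q : m2 < q := by
        have h6 : q * m2 < q * q := by omega
        exact Nat.lt_of_mul_lt_mul_left h6
      have hsub : (q - m2) + m2 = q := by omega
      have hqmul : q * (q - m2) + q * m2 = q * q := by rw [← Nat.mul_add, hsub]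
      have hd1 : d + 1 = q * (q - m2) := by omega
      obtain ⟨j, hj⟩ : q ∣ d + 1 := ⟨q - m2, hd1⟩
      rcases j with _ | _ | j
      · rw [Nat.mul_zero] at hj; omega
      · rw [Nat.mul_one] at hj
        exact hnd ⟨1, by omega⟩
      · have h7 : q * 2 ≤ q * (j + 1 + 1) := Nat.mul_le_mul_left _ (by omega)
        omega
    · -- q * m2 + d = 2N : forces d = 2(q-1)
      have hceq : q * m2 + d = 2 * N := by omega
      have h3 : q * d + d = 2 * N := by omega
      have h4 : (q + 1) * d = (q + 1) * (2 * (q - 1)) := by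
        have e2 : (q + 1) * d = q * d + d := by ring
        have e3 : (q + 1) * (2 * (q - 1)) = q * (2 * (q - 1)) + 2 * (q - 1) := by ring
        omega
      have hd2 : d = 2 * (q - 1) := Nat.eq_of_mul_eq_mul_left (by omega) h4
      exact hnd ⟨2, by omega⟩
  rw [dsum_of_not_dvd _ hmain, mul_zero, mul_zero, zero_add, zero_add]
  by_cases h0 : m0 = 0
  · by_cases h1' : m1 = 0
    · simp [h0, h1']
    · simp [h0, h1', zero_pow (Nat.mul_ne_zero (by omega : q ≠ 0) h1')]
  · simp [h0, zero_pow (Nat.mul_ne_zero (by omega : q ≠ 0) h0)]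

private lemma support_deg3 {R : Type*} [CommSemiring R] {p : MvPolynomial (Fin 3) R} {n : ℕ}
    (hp : p ∈ homogeneousSubmodule (Fin 3) R n) {m : Fin 3 →₀ ℕ} (hm : m ∈ p.support) :
    m 0 + m 1 + m 2 = n := by
  have h := (mem_homogeneousSubmodule _ _).mp hp (MvPolynomial.mem_support_iff.mp hm)
  have h2 : Finsupp.degree m = n := by rw [Finsupp.degree_eq_weight_one]; exact h
  calc m 0 + m 1 + m 2 = ∑ i : Fin 3, m i := by rw [Fin.sum_univ_three]
    _ = ∑ i ∈ m.support, m i :=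
        (Finset.sum_subset (Finset.subset_univ _)
          (fun i _ hi => Finsupp.notMem_support_iff.mp hi)).symm
    _ = n := h2

end Stmt13Aux

theorem stmt13 {F : Type*} [Field F] [Fintype F] (q d : ℕ)
    (hq : Fintype.card F = q ^ 2) (h1 : 1 ≤ d) (h2 : d ≤ 2 * (q - 1)) :
    (∃ f : MvPolynomial (Fin 3) F, f ∈ homogeneousSubmodule (Fin 3) F d ∧
      coeff (Finsupp.single 2 d) f ≠ 0 ∧
      ev F f ∈ powq q (PRM F (2 * (q ^ 2 - 1) - d) : Set (stdRep F → F))) ↔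
      d ≡ 0 [MOD q - 1] := by
  classical
  have hq2 : 2 ≤ q := by
    rcases Nat.lt_or_ge q 2 with hlt | hge
    · exfalso
      interval_cases q
      · rw [pow_two, Nat.mul_zero] at hq
        exact absurd hq Fintype.card_ne_zero
      · rw [one_pow] at hq
        have := Fintype.one_lt_card (α := F)
        omega
    · exact hge
  constructor
  · rintro ⟨f, hfmem, hc0, hpow⟩
    rw [Nat.modEq_zero_iff_dvd]
    by_contra hnd
    obtain ⟨p, hp⟩ := CharP.exists F
    haveI := hp
    obtain ⟨n, hpn, hcard⟩ := FiniteField.card F p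
    haveI : Fact p.Prime := ⟨hpn⟩
    have hqdvd : q ∣ p ^ (n : ℕ) := by
      rw [← hcard, hq, pow_two]; exact dvd_mul_right q q
    obtain ⟨k, hkn, hqpk⟩ := (Nat.dvd_prime_pow hpn).mp hqdvd
    let φ : F →+* F :=
      { toFun := fun x => x ^ q
        map_one' := one_pow q
        map_mul' := fun x y => mul_pow x y q
        map_zero' := zero_pow (by omega)
        map_add' := fun x y => by rw [hqpk]; exact add_pow_char_pow x y p k }
    have hφ : ∀ x : F, φ x = x ^ q := fun x => rfl
    obtain ⟨w, hw, hweq⟩ := hpow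
    rw [SetLike.mem_coe] at hw
    obtain ⟨g, hgmem, hgev⟩ := Submodule.mem_map.mp hw
    have hpt : ∀ v, v ∈ stdRep F → φ (eval v f) = eval v g := by
      intro v hv
      have h0 : eval v f = (eval v g) ^ q := by
        have h := congrFun hweq (⟨v, hv⟩ : stdRep F)
        rw [← hgev] at h
        simp only [ev, LinearMap.pi_apply, AlgHom.toLinearMap_apply] at h
        rw [aeval_self_eq_eval, aeval_self_eq_eval] at h
        exact h
      rw [hφ, h0, ← pow_mul, ← pow_two, ← hq]
      exact FiniteField.pow_card _
    have mem1 : ∀ s t : F, ![1, s, t] ∈ stdRep F := fun s t => Or.inl rfl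
    have mem2 : ∀ t : F, ![0, 1, t] ∈ stdRep F := fun t => Or.inr (Or.inl ⟨rfl, rfl⟩)
    have mem3 : ![0, 0, 1] ∈ stdRep F := Or.inr (Or.inr ⟨rfl, rfl, rfl⟩)
    have hA : (∑ s : F, ∑ t : F, φ (eval ![1, s, t] f) * t ^ d)
        = ∑ s : F, ∑ t : F, (RingHom.id F) (eval ![1, s, t] g) * t ^ d :=
      Finset.sum_congr rfl fun s _ => Finset.sum_congr rfl fun t _ => by
        rw [hpt _ (mem1 s t), RingHom.id_apply]
    have hB : (∑ t : F, φ (eval ![0, 1, t] f) * t ^ d)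
        = ∑ t : F, (RingHom.id F) (eval ![0, 1, t] g) * t ^ d :=
      Finset.sum_congr rfl fun t _ => by rw [hpt _ (mem2 t), RingHom.id_apply]
    have hC : φ (eval ![0, 0, 1] f) = (RingHom.id F) (eval ![0, 0, 1] g) := by
      rw [hpt _ mem3, RingHom.id_apply]
    have hEq : (∑ s : F, ∑ t : F, φ (eval ![1, s, t] f) * t ^ d)
        + (∑ t : F, φ (eval ![0, 1, t] f) * t ^ d) + φ (eval ![0, 0, 1] f)
        = (∑ s : F, ∑ t : F, (RingHom.id F) (eval ![1, s, t] g) * t ^ d)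
        + (∑ t : F, (RingHom.id F) (eval ![0, 1, t] g) * t ^ d)
        + (RingHom.id F) (eval ![0, 0, 1] g) := by
      rw [hA, hB, hC]
    rw [sum_chunkA q φ hφ f d, sum_chunkB q φ hφ f d, sum_chunkC q φ hφ f,
      sum_chunkA 1 (RingHom.id F) (fun x => (pow_one x).symm) g d,
      sum_chunkB 1 (RingHom.id F) (fun x => (pow_one x).symm) g d,
      sum_chunkC 1 (RingHom.id F) (fun x => (pow_one x).symm) g,
      ← Finset.sum_add_distrib, ← Finset.sum_add_distrib,
      ← Finset.sum_add_distrib, ← Finset.sum_add_distrib] at hEq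
    have hgz : (∑ m ∈ g.support,
        ((RingHom.id F) (coeff m g) * (dsum F (1 * m 1) * dsum F (1 * m 2 + d))
          + (RingHom.id F) (coeff m g) * ((0 : F) ^ (1 * m 0) * dsum F (1 * m 2 + d))
          + (RingHom.id F) (coeff m g) * ((0 : F) ^ (1 * m 0) * (0 : F) ^ (1 * m 1)))) = 0 := by
      refine Finset.sum_eq_zero fun m hm => ?_
      have hdeg := support_deg3 hgmem hm
      simp only [RingHom.id_apply, one_mul]
      rw [← mul_add, ← mul_add, gterm hq hq2 h1 h2 hdeg, mul_zero]
    have hfz : (∑ m ∈ f.support,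
        (φ (coeff m f) * (dsum F (q * m 1) * dsum F (q * m 2 + d))
          + φ (coeff m f) * ((0 : F) ^ (q * m 0) * dsum F (q * m 2 + d))
          + φ (coeff m f) * ((0 : F) ^ (q * m 0) * (0 : F) ^ (q * m 1))))
        = φ (coeff (Finsupp.single 2 d) f) := by
      calc (∑ m ∈ f.support,
          (φ (coeff m f) * (dsum F (q * m 1) * dsum F (q * m 2 + d))
            + φ (coeff m f) * ((0 : F) ^ (q * m 0) * dsum F (q * m 2 + d))
            + φ (coeff m f) * ((0 : F) ^ (q * m 0) * (0 : F) ^ (q * m 1))))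
          = ∑ m ∈ f.support, φ (coeff m f) * (if m 0 = 0 ∧ m 1 = 0 then 1 else 0) :=
            Finset.sum_congr rfl fun m hm => by
              rw [← mul_add, ← mul_add, fterm hq hq2 h1 h2 hnd (support_deg3 hfmem hm)]
        _ = φ (coeff (Finsupp.single 2 d) f) := by
            rw [Finset.sum_eq_single (Finsupp.single 2 d)]
            · have hs0 : (Finsupp.single 2 d : Fin 3 →₀ ℕ) 0 = 0 := by
                simp [Finsupp.single_apply]
              have hs1 : (Finsupp.single 2 d : Fin 3 →₀ ℕ) 1 = 0 := by
                simp [Finsupp.single_apply]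
              rw [if_pos ⟨hs0, hs1⟩, mul_one]
            · intro m hm hne
              by_cases hz : m 0 = 0 ∧ m 1 = 0
              · exfalso
                apply hne
                have hdeg := support_deg3 hfmem hm
                have hm2 : m 2 = d := by omega
                ext i
                fin_cases i
                · simpa [Finsupp.single_apply] using hz.1
                · simpa [Finsupp.single_apply] using hz.2
                · simpa [Finsupp.single_apply] using hm2
              · rw [if_neg hz, mul_zero]
            · intro hns
              rw [MvPolynomial.notMem_support_iff.mp hns, map_zero, zero_mul]
    rw [hfz, hgz] at hEq
    rw [hφ] at hEq
    exact hc0 (pow_eq_zero_iff (by omega : q ≠ 0) |>.mp hEq)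
  · intro hmod
    have hdvd : (q - 1) ∣ d := (Nat.modEq_zero_iff_dvd).mp hmod
    obtain ⟨k, hk⟩ := hdvd
    have hk2 : k ≤ 2 := by
      have h5 : (q - 1) * k ≤ (q - 1) * 2 := by rw [← hk]; omega
      exact Nat.le_of_mul_le_mul_left h5 (by omega)
    refine ⟨X 2 ^ d, ?_, ?_, ?_⟩
    · exact (mem_homogeneousSubmodule _ _).mpr (isHomogeneous_X_pow 2 d)
    · rw [coeff_X_pow, if_pos rfl]
      exact one_ne_zero
    · refine ⟨ev F (X 2 ^ (2 * (q ^ 2 - 1) - d)), ?_, ?_⟩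
      · exact Submodule.mem_map_of_mem
          ((mem_homogeneousSubmodule _ _).mpr (isHomogeneous_X_pow 2 _))
      · funext P
        simp only [ev, LinearMap.pi_apply, AlgHom.toLinearMap_apply, map_pow, aeval_X]
        rw [← pow_mul]
        have c1 : 1 ≤ q := by omega
        have c2 : 1 ≤ q ^ 2 := Nat.one_le_pow _ _ (by omega)
        have c3 : d ≤ 2 * (q ^ 2 - 1) := by
          have h6 : q ≤ q ^ 2 := by nlinarith
          omega
        have c4 : k ≤ 2 * q := by omega
        have hexp : (2 * (q ^ 2 - 1) - d) * q = d + (Fintype.card F - 1) * (2 * q - k) := by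
          rw [hq]
          have hkz : (d : ℤ) = ((q : ℤ) - 1) * k := by
            have h7 := hk
            zify [c1] at h7
            exact h7
          zify [c1, c2, c3, c4]
          linear_combination (-(q : ℤ) - 1) * hkz
        rw [hexp]
        exact (pow_reduce d (by omega) _ _).symm
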